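/- Let A, B be nonempty subsets of a normed space X and T a p-cyclic φ-contraction mapping. For (x₀,y₀) ∈ A × B define x_n = T(x_{n-1}, y_{n-1}) and y_n = T(y_{n-1}, x_{n-1}). Then ‖(x_n, y_n) − (x_{n+1}, y_{n+1})‖ → dist(A,B) as n → ∞. -/
import Mathlib

open Filter Topology

/-- `setDist A B = inf {‖a - b‖ : a ∈ A, b ∈ B}`. -/
noncomputable def setDist {X : Type*} [NormedAddCommGroup X] (A B : Set X) : ℝ :=
  sInf {d : ℝ | ∃ a ∈ A, ∃ b ∈ B, d = ‖a - b‖}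

lemma prod_norm_mk {X : Type*} [NormedAddCommGroup X] (a b c d : X) :
    ‖((a, b) : X × X) - (c, d)‖ = max ‖a - c‖ ‖b - d‖ := by
  simp [Prod.norm_def, Prod.mk_sub_mk]

lemma prod_norm_swap {X : Type*} [NormedAddCommGroup X] (a b c d : X) :
    ‖((a, b) : X × X) - (c, d)‖ = ‖((b, a) : X × X) - (d, c)‖ := by
  rw [prod_norm_mk, prod_norm_mk, max_comm]

theorem stmt3 {X : Type*} [NormedAddCommGroup X] [NormedSpace ℝ X]
    (A B : Set X) (hA : A.Nonempty) (hB : B.Nonempty)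
    (T : X → X → X) (φ : ℝ → ℝ)
    (hφmono : StrictMonoOn φ (Set.Ici 0)) (hφpos : ∀ t ≥ (0:ℝ), 0 ≤ φ t)
    (hTB : ∀ x ∈ A, ∀ y ∈ B, T x y ∈ B)
    (hTA : ∀ x ∈ B, ∀ y ∈ A, T x y ∈ A)
    (hT : ∀ x₁ ∈ A, ∀ y₁ ∈ B, ∀ x₂ ∈ B, ∀ y₂ ∈ A,
      ‖T x₁ y₁ - T x₂ y₂‖ ≤ ‖((x₁, y₁) : X × X) - (x₂, y₂)‖
        - φ ‖((x₁, y₁) : X × X) - (x₂, y₂)‖ + φ (setDist A B))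
    (x y : ℕ → X) (hx0 : x 0 ∈ A) (hy0 : y 0 ∈ B)
    (hx : ∀ n, x (n + 1) = T (x n) (y n))
    (hy : ∀ n, y (n + 1) = T (y n) (x n)) :
    Tendsto (fun n : ℕ => ‖((x n, y n) : X × X) - (x (n + 1), y (n + 1))‖)
      atTop (𝓝 (setDist A B)) := by
  set d := setDist A B with hd
  have hSne : {r : ℝ | ∃ a ∈ A, ∃ b ∈ B, r = ‖a - b‖}.Nonempty :=
    ⟨‖hA.choose - hB.choose‖, hA.choose, hA.choose_spec, hB.choose, hB.choose_spec, rfl⟩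
  have hSbdd : BddBelow {r : ℝ | ∃ a ∈ A, ∃ b ∈ B, r = ‖a - b‖} :=
    ⟨0, by rintro r ⟨a, _, b, _, rfl⟩; exact norm_nonneg _⟩
  have hd0 : 0 ≤ d := le_csInf hSne (by rintro r ⟨a, _, b, _, rfl⟩; exact norm_nonneg _)
  have hdle : ∀ a ∈ A, ∀ b ∈ B, d ≤ ‖a - b‖ := fun a ha b hb =>
    csInf_le hSbdd ⟨a, ha, b, hb, rfl⟩
  set D : ℕ → ℝ := fun n => ‖((x n, y n) : X × X) - (x (n + 1), y (n + 1))‖ with hD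
  have hmem : ∀ n, (x n ∈ A ∧ y n ∈ B) ∨ (x n ∈ B ∧ y n ∈ A) := by
    intro n
    induction n with
    | zero => exact Or.inl ⟨hx0, hy0⟩
    | succ n ih =>
      rcases ih with ⟨h1, h2⟩ | ⟨h1, h2⟩
      · exact Or.inr ⟨hx n ▸ hTB _ h1 _ h2, hy n ▸ hTA _ h2 _ h1⟩
      · exact Or.inl ⟨hx n ▸ hTA _ h1 _ h2, hy n ▸ hTB _ h2 _ h1⟩
  have hDlow : ∀ n, d ≤ D n := by
    intro n
    have hmax : ‖x n - x (n + 1)‖ ≤ D n := by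
      rw [hD]; simp only; rw [prod_norm_mk]; exact le_max_left _ _
    rcases hmem n with ⟨h1, h2⟩ | ⟨h1, h2⟩
    · have hx1 : x (n + 1) ∈ B := hx n ▸ hTB _ h1 _ h2
      exact le_trans (hdle _ h1 _ hx1) hmax
    · have hx1 : x (n + 1) ∈ A := hx n ▸ hTA _ h1 _ h2
      calc d ≤ ‖x (n + 1) - x n‖ := hdle _ hx1 _ h1
        _ = ‖x n - x (n + 1)‖ := norm_sub_rev _ _
        _ ≤ D n := hmax
  have hstep : ∀ n, D (n + 1) ≤ D n - φ (D n) + φ d := by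
    intro n
    rcases hmem n with ⟨h1, h2⟩ | ⟨h1, h2⟩
    · -- x n ∈ A, y n ∈ B
      have hx1 : x (n + 1) ∈ B := hx n ▸ hTB _ h1 _ h2
      have hy1 : y (n + 1) ∈ A := hy n ▸ hTA _ h2 _ h1
      have hxe : ‖x (n + 1) - x (n + 2)‖ ≤ D n - φ (D n) + φ d := by
        rw [hx n, hx (n + 1)]
        exact hT _ h1 _ h2 _ hx1 _ hy1
      have hye : ‖y (n + 1) - y (n + 2)‖ ≤ D n - φ (D n) + φ d := by
        rw [norm_sub_rev, hy n, hy (n + 1)]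
        have := hT _ hy1 _ hx1 _ h2 _ h1
        have hDrev : ‖((x (n+1), y (n+1)) : X × X) - (x n, y n)‖ = D n :=
          norm_sub_rev _ _
        rwa [prod_norm_swap (y (n+1)) (x (n+1)) (y n) (x n), hDrev] at this
      rw [hD]; simp only; rw [prod_norm_mk]
      exact max_le hxe hye
    · -- x n ∈ B, y n ∈ A
      have hx1 : x (n + 1) ∈ A := hx n ▸ hTA _ h1 _ h2
      have hy1 : y (n + 1) ∈ B := hy n ▸ hTB _ h2 _ h1
      have hxe : ‖x (n + 1) - x (n + 2)‖ ≤ D n - φ (D n) + φ d := by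
        rw [norm_sub_rev, hx n, hx (n + 1)]
        have := hT _ hx1 _ hy1 _ h1 _ h2
        have hDrev : ‖((x (n+1), y (n+1)) : X × X) - (x n, y n)‖ = D n :=
          norm_sub_rev _ _
        rwa [hDrev] at this
      have hye : ‖y (n + 1) - y (n + 2)‖ ≤ D n - φ (D n) + φ d := by
        rw [hy n, hy (n + 1)]
        have := hT _ h2 _ h1 _ hy1 _ hx1
        rwa [prod_norm_swap (y n) (x n) (y (n+1)) (x (n+1))] at this
      rw [hD]; simp only; rw [prod_norm_mk]
      exact max_le hxe hye
  have hDmem : ∀ n, D n ∈ Set.Ici (0 : ℝ) := fun n => le_trans hd0 (hDlow n)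
  have hanti : Antitone D := by
    apply antitone_nat_of_succ_le
    intro n
    have h1 := hstep n
    have h2 : φ d ≤ φ (D n) := hφmono.monotoneOn hd0 (hDmem n) (hDlow n)
    linarith
  have hbdd : BddBelow (Set.range D) := ⟨d, by rintro r ⟨n, rfl⟩; exact hDlow n⟩
  have htend : Tendsto D atTop (𝓝 (⨅ n, D n)) := tendsto_atTop_ciInf hanti hbdd
  set L := ⨅ n, D n with hL
  have hLd : d ≤ L := le_ciInf hDlow
  have hLD : ∀ n, L ≤ D n := fun n => ciInf_le hbdd n
  have hLmem : L ∈ Set.Ici (0 : ℝ) := le_trans hd0 hLd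
  have hLeq : L = d := by
    by_contra hne
    have hlt : d < L := lt_of_le_of_ne hLd (Ne.symm hne)
    have hφlt : φ d < φ L := hφmono hd0 hLmem hlt
    set ε := φ L - φ d with hε
    have hεpos : 0 < ε := by linarith
    have key : ∀ n : ℕ, D n ≤ D 0 - n * ε := by
      intro n
      induction n with
      | zero => simp
      | succ n ih =>
        have h1 := hstep n
        have h2 : φ L ≤ φ (D n) := hφmono.monotoneOn hLmem (hDmem n) (hLD n)
        push_cast
        linarith
    obtain ⟨n, hn⟩ := exists_nat_gt ((D 0 - d) / ε)
    have : D 0 - d < n * ε := by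
      rw [div_lt_iff₀ hεpos] at hn
      linarith
    have := key n
    have := hDlow n
    linarith
  rwa [hLeq] at htend
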